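/- arXiv:1003.4482 — 2 statements merged into one kernel-verified Lean document; each statement's English description precedes it below -/
import Mathlib

section
/- The number of 3-dimensional p×q×r matrices with nonnegative integer entries and 1-marginals λ, μ, ν (i.e., Σ_{j,k} a_{ijk} = λ_i, Σ_{i,k} a_{ijk} = μ_j, Σ_{i,j} a_{ijk} = ν_k) equals the inner product ⟨φ^λ ⊗ φ^μ ⊗ φ^ν, χ^(n)⟩ of characters of S_n. -/
open Finset Equiv
open scoped Classical

noncomputable section

/-- Value at `g` of the permutation character of `S_n` induced from the trivial character of
the Young subgroup of the composition `c`: the number of colorings of `Fin n` with fiber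
sizes given by `c` that are fixed by `g`. -/
def permChar (n : ℕ) (c : ℕ → ℕ) (g : Perm (Fin n)) : ℚ :=
  Nat.card {f : Fin n → ℕ // (∀ k, Nat.card {x : Fin n // f x = k} = c k) ∧ ∀ x, f (g x) = f x}

/-- Inner product of class functions (real-valued characters) of `S_n`. -/
def innerChar (n : ℕ) (χ ψ : Perm (Fin n) → ℚ) : ℚ :=
  (∑ g : Perm (Fin n), χ g * ψ g) / (n.factorial : ℚ)

/-- The trivial character `χ^{(n)}` of `S_n`. -/
def trivChar (n : ℕ) : Perm (Fin n) → ℚ := fun _ => 1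

/-- The sign character `χ^{(1^n)}` of `S_n`. -/
def signChar (n : ℕ) : Perm (Fin n) → ℚ := fun g => ((Perm.sign g : ℤ) : ℚ)

/-- Permutation character for an integer vector: zero if some entry is negative. -/
def permCharZ (n : ℕ) (c : ℕ → ℤ) (g : Perm (Fin n)) : ℚ :=
  if ∀ k, 0 ≤ c k then permChar n (fun k => (c k).toNat) g else 0

/-- The irreducible character `χ^a` of `S_n` indexed by the partition `a`, given by the
Jacobi–Trudi determinantal formula `χ^a = ∑_σ sgn(σ) φ^{(a_i - i + σ(i))_i}`. -/
def irrChar (n : ℕ) (a : ℕ → ℕ) (g : Perm (Fin n)) : ℚ :=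
  ∑ σ : Perm (Fin n), ((Perm.sign σ : ℤ) : ℚ) *
    permCharZ n (fun i => if h : i < n then (a i : ℤ) - i + ((σ ⟨i, h⟩ : Fin n) : ℕ) else 0) g

/-- Kronecker coefficient `k(a,b,c) = ⟨χ^a ⊗ χ^b, χ^c⟩`. -/
def kron (n : ℕ) (a b c : ℕ → ℕ) : ℚ :=
  innerChar n (fun g => irrChar n a g * irrChar n b g) (irrChar n c)

/-- Extend a vector indexed by `Fin p` to `ℕ` by zeros. -/
def extc {p : ℕ} (l : Fin p → ℕ) : ℕ → ℕ := fun i => if h : i < p then l ⟨i, h⟩ else 0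

/-- Dominance order: `a ⊵ b`. -/
def Dominates (a b : ℕ → ℕ) : Prop :=
  ∀ k, ∑ i ∈ Finset.range k, b i ≤ ∑ i ∈ Finset.range k, a i

/-- Conjugate (transpose) of a partition with at most `n` parts. -/
def conjFun (n : ℕ) (a : ℕ → ℕ) : ℕ → ℕ :=
  fun j => ((Finset.range n).filter (fun i => j < a i)).card

/-- `a` is a partition of `n` (weakly decreasing, supported on the first `n` parts). -/
def IsPartitionFun (n : ℕ) (a : ℕ → ℕ) : Prop :=
  (∀ i j, i ≤ j → a j ≤ a i) ∧ (∀ i, n ≤ i → a i = 0) ∧ ∑ i ∈ Finset.range n, a i = n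

/-- The weakly decreasing sequence of parts of `P : Nat.Partition n`. -/
def pf {n : ℕ} (P : n.Partition) : ℕ → ℕ :=
  fun i => ((P.parts.sort (· ≤ ·)).reverse).getD i 0

/-- The parts of `P : Nat.Partition n` as a vector of length `n`. -/
def pfin {n : ℕ} (P : n.Partition) : Fin n → ℕ := fun k => pf P k

/-- Number of cells of the skew shape `a/b` where the filling `T` has entry `k`. -/
def skewContent (a b : ℕ → ℕ) (T : ℕ → ℕ → ℕ) (k : ℕ) : ℕ :=
  Nat.card {p : ℕ × ℕ // b p.1 ≤ p.2 ∧ p.2 < a p.1 ∧ T p.1 p.2 = k}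

/-- Number of cells of the skew shape `a/b`. -/
def skewSize (a b : ℕ → ℕ) : ℕ :=
  Nat.card {p : ℕ × ℕ // b p.1 ≤ p.2 ∧ p.2 < a p.1}

/-- `T` is a semistandard filling of the shape `a` (zero outside, rows weakly increasing,
columns strictly increasing). -/
def IsSSYT (a : ℕ → ℕ) (T : ℕ → ℕ → ℕ) : Prop :=
  (∀ i j, a i ≤ j → T i j = 0) ∧
  (∀ i j₁ j₂, j₁ ≤ j₂ → j₂ < a i → T i j₁ ≤ T i j₂) ∧
  (∀ i₁ i₂ j, i₁ < i₂ → j < a i₂ → T i₁ j < T i₂ j)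

/-- The Kostka number: the number of semistandard Young tableaux of shape `a`
and content `c`. -/
def kostka (a c : ℕ → ℕ) : ℕ :=
  Nat.card {T : ℕ → ℕ → ℕ // IsSSYT a T ∧ ∀ k, skewContent a (fun _ => 0) T k = c k}

/-- Number of entries equal to `k` in the prefix of the (right-to-left, top-to-bottom)
reading word of `T` ending at position `(i,j)`. -/
def lrCount (a b : ℕ → ℕ) (T : ℕ → ℕ → ℕ) (i j k : ℕ) : ℕ :=
  Nat.card {p : ℕ × ℕ //
    (p.1 < i ∨ (p.1 = i ∧ j ≤ p.2)) ∧ b p.1 ≤ p.2 ∧ p.2 < a p.1 ∧ T p.1 p.2 = k}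

/-- `T` is a Littlewood–Richardson skew tableau of shape `a/b`: semistandard and its
reverse reading word is a lattice word. -/
def IsLR (a b : ℕ → ℕ) (T : ℕ → ℕ → ℕ) : Prop :=
  (∀ i j, ¬(b i ≤ j ∧ j < a i) → T i j = 0) ∧
  (∀ i j₁ j₂, b i ≤ j₁ → j₁ ≤ j₂ → j₂ < a i → T i j₁ ≤ T i j₂) ∧
  (∀ i₁ i₂ j, i₁ < i₂ → b i₁ ≤ j → j < a i₁ → b i₂ ≤ j → j < a i₂ → T i₁ j < T i₂ j) ∧
  (∀ i j k, lrCount a b T i j (k + 1) ≤ lrCount a b T i j k)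

/-- A Littlewood–Richardson multitableau of shape `α` with `r` parts: a chain of
partitions `0 = α(0) ⊆ α(1) ⊆ ⋯ ⊆ α(r) = α` together with Littlewood–Richardson
fillings of the successive skew shapes. -/
structure LRMultiF (r : ℕ) (α : ℕ → ℕ) where
  chain : Fin (r + 1) → ℕ → ℕ
  antitone : ∀ k i j, i ≤ j → chain k j ≤ chain k i
  zero : ∀ i, chain 0 i = 0
  last : ∀ i, chain (Fin.last r) i = α i
  mono : ∀ (k : Fin r) (i : ℕ), chain k.castSucc i ≤ chain k.succ i
  T : Fin r → ℕ → ℕ → ℕ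
  lr : ∀ k : Fin r, IsLR (chain k.succ) (chain k.castSucc) (T k)

/-- Content of the `k`-th tableau of a Littlewood–Richardson multitableau. -/
def LRMultiF.cont {r : ℕ} {α : ℕ → ℕ} (M : LRMultiF r α) (k : Fin r) : ℕ → ℕ :=
  skewContent (M.chain k.succ) (M.chain k.castSucc) (M.T k)

/-- Size of the `k`-th tableau of a Littlewood–Richardson multitableau. -/
def LRMultiF.size {r : ℕ} {α : ℕ → ℕ} (M : LRMultiF r α) (k : Fin r) : ℕ :=
  skewSize (M.chain k.succ) (M.chain k.castSucc)

/-- `LR(α,β;ν)`: pairs of Littlewood–Richardson multitableaux of shapes `α`, `β`,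
type `ν`, with equal contents. -/
def LRPairs (r : ℕ) (α β : ℕ → ℕ) (ν : Fin r → ℕ) :=
  {TS : LRMultiF r α × LRMultiF r β //
    (∀ k, TS.1.size k = ν k) ∧ (∀ k, TS.2.size k = ν k) ∧ ∀ k, TS.1.cont k = TS.2.cont k}

/-- `LR*(α,β;ν)`: pairs of Littlewood–Richardson multitableaux of shapes `α`, `β`,
type `ν`, with termwise conjugate contents. -/
def LRPairsStar (n r : ℕ) (α β : ℕ → ℕ) (ν : Fin r → ℕ) :=
  {TS : LRMultiF r α × LRMultiF r β //
    (∀ k, TS.1.size k = ν k) ∧ (∀ k, TS.2.size k = ν k) ∧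
      ∀ k m, TS.2.cont k m = conjFun n (TS.1.cont k) m}

/-- `lr(α,β;ν)`. -/
def lrNum (r : ℕ) (α β : ℕ → ℕ) (ν : Fin r → ℕ) : ℕ := Nat.card (LRPairs r α β ν)

/-- `lr*(α,β;ν)`. -/
def lrStarNum (n r : ℕ) (α β : ℕ → ℕ) (ν : Fin r → ℕ) : ℕ :=
  Nat.card (LRPairsStar n r α β ν)

/-- A semistandard Young tableau (of arbitrary partition shape). -/
structure SSYTP where
  shape : ℕ → ℕ
  T : ℕ → ℕ → ℕ
  antitone : ∀ i j, i ≤ j → shape j ≤ shape i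
  finite : ∃ N, ∀ i, N ≤ i → shape i = 0
  ssyt : IsSSYT shape T

/-- Content of a semistandard Young tableau. -/
def SSYTP.cont (P : SSYTP) : ℕ → ℕ := skewContent P.shape (fun _ => 0) P.T

/-- The multiset of entries of a matrix. -/
def entriesM {p q : ℕ} (A : Fin p → Fin q → ℕ) : Multiset ℕ :=
  (Finset.univ : Finset (Fin p × Fin q)).val.map (fun ij => A ij.1 ij.2)

/-- The π-sequence of `A` is the partition `ν` (the weakly decreasing rearrangement of
the entries of `A` is `ν`). -/
def HasPiSeq {p q : ℕ} (A : Fin p → Fin q → ℕ) {n : ℕ} (ν : n.Partition) : Prop :=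
  (entriesM A).filter (· ≠ 0) = ν.parts

end

open MulAction

noncomputable section SnapperAux

lemma fiber_bound {n p : ℕ} {c : Fin p → ℕ} {f : Fin n → ℕ}
    (hf : ∀ k, Nat.card {x : Fin n // f x = k} = extc c k) (t : Fin n) : f t < p := by
  by_contra h
  have h0 : extc c (f t) = 0 := dif_neg h
  have h1 := hf (f t)
  rw [h0] at h1
  rcases Nat.card_eq_zero.mp h1 with h2 | h2
  · exact h2.elim ⟨t, rfl⟩
  · exact @not_finite _ h2 inferInstance

lemma card_fiber_split {n : ℕ} {γ : Type*} [Fintype γ] (P : Fin n → Prop) (G : Fin n → γ) :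
    Nat.card {t : Fin n // P t} = ∑ c : γ, Nat.card {t : Fin n // P t ∧ G t = c} := by
  classical
  simp only [Nat.card_eq_fintype_card, Fintype.card_subtype]
  rw [Finset.card_eq_sum_card_fiberwise (f := G) (t := Finset.univ) (fun x _ => mem_univ _)]
  refine Finset.sum_congr rfl fun c _ => ?_
  rw [Finset.filter_filter]

section XT

variable (n p q r : ℕ) (l : Fin p → ℕ) (m : Fin q → ℕ) (ν : Fin r → ℕ)

def XT : Type :=
  {f : (Fin n → ℕ) × (Fin n → ℕ) × (Fin n → ℕ) //
    (∀ k, Nat.card {x : Fin n // f.1 x = k} = extc l k) ∧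
    (∀ k, Nat.card {x : Fin n // f.2.1 x = k} = extc m k) ∧
    (∀ k, Nat.card {x : Fin n // f.2.2 x = k} = extc ν k)}

variable {n p q r l m ν}

instance : Finite (XT n p q r l m ν) := by
  apply Finite.of_injective (f := fun x : XT n p q r l m ν =>
    ((fun t => (⟨x.1.1 t, fiber_bound x.2.1 t⟩ : Fin p)),
     (fun t => (⟨x.1.2.1 t, fiber_bound x.2.2.1 t⟩ : Fin q)),
     (fun t => (⟨x.1.2.2 t, fiber_bound x.2.2.2 t⟩ : Fin r))))
  intro a b h
  have h1 := congrArg Prod.fst h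
  have h2 := congrArg (fun z => z.2.1) h
  have h3 := congrArg (fun z => z.2.2) h
  apply Subtype.ext
  refine Prod.ext ?_ (Prod.ext ?_ ?_) <;> funext t
  · exact congrArg Fin.val (congrFun h1 t)
  · exact congrArg Fin.val (congrFun h2 t)
  · exact congrArg Fin.val (congrFun h3 t)

lemma comp_fiber_card (g : Perm (Fin n)) (f : Fin n → ℕ) (k : ℕ) :
    Nat.card {t : Fin n // f (g⁻¹ t) = k} = Nat.card {t : Fin n // f t = k} :=
  (Nat.card_congr (Equiv.subtypeEquiv g (fun a => by simp))).symm

instance : MulAction (Perm (Fin n)) (XT n p q r l m ν) where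
  smul g x := ⟨(x.1.1 ∘ ⇑g⁻¹, x.1.2.1 ∘ ⇑g⁻¹, x.1.2.2 ∘ ⇑g⁻¹), by
    obtain ⟨h1, h2, h3⟩ := x.2
    exact ⟨fun k => (comp_fiber_card g _ k).trans (h1 k),
      fun k => (comp_fiber_card g _ k).trans (h2 k),
      fun k => (comp_fiber_card g _ k).trans (h3 k)⟩⟩
  one_smul x := by
    apply Subtype.ext
    refine Prod.ext ?_ (Prod.ext ?_ ?_) <;> funext t
    · show x.1.1 ((1 : Perm (Fin n))⁻¹ t) = x.1.1 t; simp
    · show x.1.2.1 ((1 : Perm (Fin n))⁻¹ t) = x.1.2.1 t; simp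
    · show x.1.2.2 ((1 : Perm (Fin n))⁻¹ t) = x.1.2.2 t; simp
  mul_smul g h x := by
    apply Subtype.ext
    refine Prod.ext ?_ (Prod.ext ?_ ?_) <;> funext t
    · show x.1.1 ((g * h)⁻¹ t) = x.1.1 (h⁻¹ (g⁻¹ t)); simp
    · show x.1.2.1 ((g * h)⁻¹ t) = x.1.2.1 (h⁻¹ (g⁻¹ t)); simp
    · show x.1.2.2 ((g * h)⁻¹ t) = x.1.2.2 (h⁻¹ (g⁻¹ t)); simp

lemma XT_smul_def (g : Perm (Fin n)) (x : XT n p q r l m ν) :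
    (g • x).1 = (x.1.1 ∘ ⇑g⁻¹, x.1.2.1 ∘ ⇑g⁻¹, x.1.2.2 ∘ ⇑g⁻¹) := rfl

end XT

noncomputable section MatOf

def sigmaFstFiberEquiv {ι : Type*} {β : ι → Type*} (v : ι) :
    {s : Σ i, β i // s.1 = v} ≃ β v where
  toFun s := cast (congrArg β s.2) s.1.2
  invFun b := ⟨⟨v, b⟩, rfl⟩
  left_inv := by rintro ⟨⟨i, b⟩, rfl⟩; rfl
  right_inv b := rfl

variable {n p q r : ℕ} {l : Fin p → ℕ} {m : Fin q → ℕ} {ν : Fin r → ℕ}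

lemma extc_coe (l : Fin p → ℕ) (i : Fin p) : extc l ↑i = l i := by simp [extc]

def matOf (x : XT n p q r l m ν) : Fin p → Fin q → Fin r → ℕ := fun i j k =>
  Nat.card {t : Fin n // x.1.1 t = ↑i ∧ x.1.2.1 t = ↑j ∧ x.1.2.2 t = ↑k}

lemma matOf_marg1 (x : XT n p q r l m ν) (i : Fin p) :
    ∑ j, ∑ k, matOf x i j k = l i := by
  have hb2 : ∀ t, x.1.2.1 t < q := fiber_bound x.2.2.1
  have hb3 : ∀ t, x.1.2.2 t < r := fiber_bound x.2.2.2
  have hs := card_fiber_split (fun t => x.1.1 t = ↑i)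
      (fun t => ((⟨x.1.2.1 t, hb2 t⟩ : Fin q), (⟨x.1.2.2 t, hb3 t⟩ : Fin r)))
  rw [x.2.1 ↑i, extc_coe] at hs
  rw [hs, Fintype.sum_prod_type]
  refine Finset.sum_congr rfl fun j _ => Finset.sum_congr rfl fun k _ => ?_
  exact Nat.card_congr (Equiv.subtypeEquivRight fun t => by
    simp [matOf, Prod.ext_iff, Fin.ext_iff])

lemma matOf_marg2 (x : XT n p q r l m ν) (j : Fin q) :
    ∑ i, ∑ k, matOf x i j k = m j := by
  have hb1 : ∀ t, x.1.1 t < p := fiber_bound x.2.1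
  have hb3 : ∀ t, x.1.2.2 t < r := fiber_bound x.2.2.2
  have hs := card_fiber_split (fun t => x.1.2.1 t = ↑j)
      (fun t => ((⟨x.1.1 t, hb1 t⟩ : Fin p), (⟨x.1.2.2 t, hb3 t⟩ : Fin r)))
  rw [x.2.2.1 ↑j, extc_coe] at hs
  rw [hs, Fintype.sum_prod_type]
  refine Finset.sum_congr rfl fun i _ => Finset.sum_congr rfl fun k _ => ?_
  refine Nat.card_congr (Equiv.subtypeEquivRight fun t => ?_)
  simp [matOf, Prod.ext_iff, Fin.ext_iff]
  tauto

lemma matOf_marg3 (x : XT n p q r l m ν) (k : Fin r) :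
    ∑ i, ∑ j, matOf x i j k = ν k := by
  have hb1 : ∀ t, x.1.1 t < p := fiber_bound x.2.1
  have hb2 : ∀ t, x.1.2.1 t < q := fiber_bound x.2.2.1
  have hs := card_fiber_split (fun t => x.1.2.2 t = ↑k)
      (fun t => ((⟨x.1.1 t, hb1 t⟩ : Fin p), (⟨x.1.2.1 t, hb2 t⟩ : Fin q)))
  rw [x.2.2.2 ↑k, extc_coe] at hs
  rw [hs, Fintype.sum_prod_type]
  refine Finset.sum_congr rfl fun i _ => Finset.sum_congr rfl fun j _ => ?_
  refine Nat.card_congr (Equiv.subtypeEquivRight fun t => ?_)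
  simp [matOf, Prod.ext_iff, Fin.ext_iff]
  tauto

lemma matOf_smul (g : Perm (Fin n)) (x : XT n p q r l m ν) : matOf (g • x) = matOf x := by
  funext i j k
  exact (Nat.card_congr (Equiv.subtypeEquiv g (fun a => by
    simp [XT_smul_def (l := l) (m := m) (ν := ν) g x]))).symm

lemma matOf_eq_orbit (x y : XT n p q r l m ν) (h : matOf x = matOf y) :
    ∃ g : Perm (Fin n), g • x = y := by
  classical
  let Fx : Fin n → Fin p × Fin q × Fin r := fun t =>
    (⟨x.1.1 t, fiber_bound x.2.1 t⟩, ⟨x.1.2.1 t, fiber_bound x.2.2.1 t⟩,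
     ⟨x.1.2.2 t, fiber_bound x.2.2.2 t⟩)
  let Fy : Fin n → Fin p × Fin q × Fin r := fun t =>
    (⟨y.1.1 t, fiber_bound y.2.1 t⟩, ⟨y.1.2.1 t, fiber_bound y.2.2.1 t⟩,
     ⟨y.1.2.2 t, fiber_bound y.2.2.2 t⟩)
  have hEquiv : ∀ v, Nonempty ({t // Fx t = v} ≃ {t // Fy t = v}) := by
    intro v
    refine Finite.card_eq.mp ?_
    have hx : Nat.card {t // Fx t = v} = matOf x v.1 v.2.1 v.2.2 :=
      Nat.card_congr (Equiv.subtypeEquivRight fun t => by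
        simp [Fx, Prod.ext_iff, Fin.ext_iff])
    have hy : Nat.card {t // Fy t = v} = matOf y v.1 v.2.1 v.2.2 :=
      Nat.card_congr (Equiv.subtypeEquivRight fun t => by
        simp [Fy, Prod.ext_iff, Fin.ext_iff])
    rw [hx, hy, h]
  let g : Perm (Fin n) := (Equiv.sigmaFiberEquiv Fx).symm.trans
    ((Equiv.sigmaCongrRight (fun v => (hEquiv v).some)).trans (Equiv.sigmaFiberEquiv Fy))
  have key : ∀ t, Fy (g t) = Fx t := fun t => ((hEquiv (Fx t)).some ⟨t, rfl⟩).2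
  have k1 : ∀ t, y.1.1 (g t) = x.1.1 t := fun t =>
    congrArg (fun v : Fin p × Fin q × Fin r => (v.1 : ℕ)) (key t)
  have k2 : ∀ t, y.1.2.1 (g t) = x.1.2.1 t := fun t =>
    congrArg (fun v : Fin p × Fin q × Fin r => (v.2.1 : ℕ)) (key t)
  have k3 : ∀ t, y.1.2.2 (g t) = x.1.2.2 t := fun t =>
    congrArg (fun v : Fin p × Fin q × Fin r => (v.2.2 : ℕ)) (key t)
  refine ⟨g, Subtype.ext ?_⟩
  refine Prod.ext ?_ (Prod.ext ?_ ?_) <;> funext s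
  · show x.1.1 (g⁻¹ s) = y.1.1 s
    have := k1 (g⁻¹ s); rw [Perm.coe_inv, Equiv.apply_symm_apply] at this; exact this.symm
  · show x.1.2.1 (g⁻¹ s) = y.1.2.1 s
    have := k2 (g⁻¹ s); rw [Perm.coe_inv, Equiv.apply_symm_apply] at this; exact this.symm
  · show x.1.2.2 (g⁻¹ s) = y.1.2.2 s
    have := k3 (g⁻¹ s); rw [Perm.coe_inv, Equiv.apply_symm_apply] at this; exact this.symm

end MatOf

noncomputable section Surj

variable {n p q r : ℕ} {l : Fin p → ℕ} {m : Fin q → ℕ} {ν : Fin r → ℕ}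

lemma matOf_surj (hl : ∑ i, l i = n)
    (hm : ∑ j, m j = n) (hν : ∑ k, ν k = n)
    (A : Fin p → Fin q → Fin r → ℕ)
    (h1 : ∀ i, ∑ j, ∑ k, A i j k = l i) (h2 : ∀ j, ∑ i, ∑ k, A i j k = m j)
    (h3 : ∀ k, ∑ i, ∑ j, A i j k = ν k) :
    ∃ x : XT n p q r l m ν, matOf x = A := by
  classical
  have hcard : Fintype.card (Σ v : Fin p × Fin q × Fin r, Fin (A v.1 v.2.1 v.2.2)) = n := by
    rw [Fintype.card_sigma]
    simp only [Fintype.card_fin]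
    rw [Fintype.sum_prod_type, ← hl]
    refine Finset.sum_congr rfl fun i _ => ?_
    rw [← h1 i, Fintype.sum_prod_type]
  let e : Fin n ≃ Σ v : Fin p × Fin q × Fin r, Fin (A v.1 v.2.1 v.2.2) :=
    (Fintype.equivFinOfCardEq hcard).symm
  let f₁ : Fin n → ℕ := fun t => ((e t).1.1 : ℕ)
  let f₂ : Fin n → ℕ := fun t => ((e t).1.2.1 : ℕ)
  let f₃ : Fin n → ℕ := fun t => ((e t).1.2.2 : ℕ)
  have joint : ∀ v : Fin p × Fin q × Fin r,
      Nat.card {t : Fin n // (e t).1 = v} = A v.1 v.2.1 v.2.2 := by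
    intro v
    rw [Nat.card_congr ((Equiv.subtypeEquiv e (fun t => Iff.rfl)).trans (sigmaFstFiberEquiv v)),
      Nat.card_eq_fintype_card, Fintype.card_fin]
  have cond1 : ∀ k0, Nat.card {t : Fin n // f₁ t = k0} = extc l k0 := by
    intro k0
    by_cases hk : k0 < p
    · rw [card_fiber_split (fun t => f₁ t = k0) (fun t => ((e t).1.2.1, (e t).1.2.2))]
      have he : ∀ c : Fin q × Fin r,
          Nat.card {t : Fin n // f₁ t = k0 ∧ ((e t).1.2.1, (e t).1.2.2) = c}
            = A ⟨k0, hk⟩ c.1 c.2 := by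
        intro c
        rw [← joint (⟨k0, hk⟩, c.1, c.2)]
        refine Nat.card_congr (Equiv.subtypeEquivRight fun t => ?_)
        simp [f₁, Prod.ext_iff, Fin.ext_iff]
      simp only [he]
      rw [show extc l k0 = l ⟨k0, hk⟩ from dif_pos hk, ← h1 ⟨k0, hk⟩, Fintype.sum_prod_type]
    · have : IsEmpty {t : Fin n // f₁ t = k0} :=
        ⟨fun ⟨t, ht⟩ => hk (ht ▸ (e t).1.1.isLt)⟩
      rw [Nat.card_of_isEmpty]
      simp [extc, hk]
  have cond2 : ∀ k0, Nat.card {t : Fin n // f₂ t = k0} = extc m k0 := by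
    intro k0
    by_cases hk : k0 < q
    · rw [card_fiber_split (fun t => f₂ t = k0) (fun t => ((e t).1.1, (e t).1.2.2))]
      have he : ∀ c : Fin p × Fin r,
          Nat.card {t : Fin n // f₂ t = k0 ∧ ((e t).1.1, (e t).1.2.2) = c}
            = A c.1 ⟨k0, hk⟩ c.2 := by
        intro c
        rw [← joint (c.1, ⟨k0, hk⟩, c.2)]
        refine Nat.card_congr (Equiv.subtypeEquivRight fun t => ?_)
        simp [f₂, Prod.ext_iff, Fin.ext_iff]
        tauto
      simp only [he]
      rw [show extc m k0 = m ⟨k0, hk⟩ from dif_pos hk, ← h2 ⟨k0, hk⟩, Fintype.sum_prod_type]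
    · have : IsEmpty {t : Fin n // f₂ t = k0} :=
        ⟨fun ⟨t, ht⟩ => hk (ht ▸ (e t).1.2.1.isLt)⟩
      rw [Nat.card_of_isEmpty]
      simp [extc, hk]
  have cond3 : ∀ k0, Nat.card {t : Fin n // f₃ t = k0} = extc ν k0 := by
    intro k0
    by_cases hk : k0 < r
    · rw [card_fiber_split (fun t => f₃ t = k0) (fun t => ((e t).1.1, (e t).1.2.1))]
      have he : ∀ c : Fin p × Fin q,
          Nat.card {t : Fin n // f₃ t = k0 ∧ ((e t).1.1, (e t).1.2.1) = c}
            = A c.1 c.2 ⟨k0, hk⟩ := by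
        intro c
        rw [← joint (c.1, c.2, ⟨k0, hk⟩)]
        refine Nat.card_congr (Equiv.subtypeEquivRight fun t => ?_)
        simp [f₃, Prod.ext_iff, Fin.ext_iff]
        tauto
      simp only [he]
      rw [show extc ν k0 = ν ⟨k0, hk⟩ from dif_pos hk, ← h3 ⟨k0, hk⟩, Fintype.sum_prod_type]
    · have : IsEmpty {t : Fin n // f₃ t = k0} :=
        ⟨fun ⟨t, ht⟩ => hk (ht ▸ (e t).1.2.2.isLt)⟩
      rw [Nat.card_of_isEmpty]
      simp [extc, hk]
  refine ⟨⟨(f₁, f₂, f₃), cond1, cond2, cond3⟩, ?_⟩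
  funext i j k
  rw [← joint (i, j, k)]
  refine Nat.card_congr (Equiv.subtypeEquivRight fun t => ?_)
  simp [matOf, f₁, f₂, f₃, Prod.ext_iff, Fin.ext_iff]

end Surj



noncomputable section Fixed

variable {n p q r : ℕ} {l : Fin p → ℕ} {m : Fin q → ℕ} {ν : Fin r → ℕ}

lemma fixed_iff (g : Perm (Fin n)) (x : XT n p q r l m ν) :
    g • x = x ↔ (∀ t, x.1.1 (g t) = x.1.1 t) ∧ (∀ t, x.1.2.1 (g t) = x.1.2.1 t) ∧
      (∀ t, x.1.2.2 (g t) = x.1.2.2 t) := by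
  constructor
  · intro h
    have h' := congrArg Subtype.val h
    rw [XT_smul_def] at h'
    rw [Prod.ext_iff, Prod.ext_iff] at h'
    obtain ⟨e1, e2, e3⟩ := h'
    refine ⟨fun t => ?_, fun t => ?_, fun t => ?_⟩
    · have := congrFun e1 (g t); simpa using this.symm
    · have := congrFun e2 (g t); simpa using this.symm
    · have := congrFun e3 (g t); simpa using this.symm
  · rintro ⟨h1, h2, h3⟩
    apply Subtype.ext
    rw [XT_smul_def]
    refine Prod.ext ?_ (Prod.ext ?_ ?_) <;> funext t
    · have := h1 (g⁻¹ t); rw [Perm.coe_inv, Equiv.apply_symm_apply] at this; exact this.symm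
    · have := h2 (g⁻¹ t); rw [Perm.coe_inv, Equiv.apply_symm_apply] at this; exact this.symm
    · have := h3 (g⁻¹ t); rw [Perm.coe_inv, Equiv.apply_symm_apply] at this; exact this.symm

def fixedEquiv (g : Perm (Fin n)) :
    (fixedBy (XT n p q r l m ν) g) ≃
      ({f : Fin n → ℕ // (∀ k, Nat.card {x : Fin n // f x = k} = extc l k) ∧ ∀ x, f (g x) = f x} ×
       {f : Fin n → ℕ // (∀ k, Nat.card {x : Fin n // f x = k} = extc m k) ∧ ∀ x, f (g x) = f x} ×
       {f : Fin n → ℕ // (∀ k, Nat.card {x : Fin n // f x = k} = extc ν k) ∧ ∀ x, f (g x) = f x}) where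
  toFun x :=
    (⟨x.1.1.1, x.1.2.1, ((fixed_iff g x.1).mp x.2).1⟩,
     ⟨x.1.1.2.1, x.1.2.2.1, ((fixed_iff g x.1).mp x.2).2.1⟩,
     ⟨x.1.1.2.2, x.1.2.2.2, ((fixed_iff g x.1).mp x.2).2.2⟩)
  invFun abc :=
    ⟨⟨(abc.1.1, abc.2.1.1, abc.2.2.1), abc.1.2.1, abc.2.1.2.1, abc.2.2.2.1⟩,
      (fixed_iff g _).mpr ⟨abc.1.2.2, abc.2.1.2.2, abc.2.2.2.2⟩⟩
  left_inv x := Subtype.ext (Subtype.ext rfl)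
  right_inv abc := rfl

end Fixed

end SnapperAux

/-- Snapper: the number of `p × q × r` nonnegative integer matrices with
1-marginals `l`, `m`, `ν` equals `⟨φ^l ⊗ φ^m ⊗ φ^ν, χ^{(n)}⟩`. -/
theorem stmt4 (n p q r : ℕ) (l : Fin p → ℕ) (m : Fin q → ℕ) (ν : Fin r → ℕ)
    (hl : ∑ i, l i = n) (hm : ∑ j, m j = n) (hν : ∑ k, ν k = n) :
    (Nat.card {A : Fin p → Fin q → Fin r → ℕ //
        (∀ i, ∑ j, ∑ k, A i j k = l i) ∧ (∀ j, ∑ i, ∑ k, A i j k = m j) ∧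
        (∀ k, ∑ i, ∑ j, A i j k = ν k)} : ℚ) =
      innerChar n
        (fun g => permChar n (extc l) g * permChar n (extc m) g * permChar n (extc ν) g)
        (trivChar n) := by
  classical
  letI : Fintype (XT n p q r l m ν) := Fintype.ofFinite _
  letI : ∀ g : Perm (Fin n), Fintype (fixedBy (XT n p q r l m ν) g) :=
    fun g => Fintype.ofFinite _
  letI : Fintype (orbitRel.Quotient (Perm (Fin n)) (XT n p q r l m ν)) := Fintype.ofFinite _
  have burn := MulAction.sum_card_fixedBy_eq_card_orbits_mul_card_group
    (Perm (Fin n)) (XT n p q r l m ν)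
  let Φ : orbitRel.Quotient (Perm (Fin n)) (XT n p q r l m ν) →
      {A : Fin p → Fin q → Fin r → ℕ //
        (∀ i, ∑ j, ∑ k, A i j k = l i) ∧ (∀ j, ∑ i, ∑ k, A i j k = m j) ∧
        (∀ k, ∑ i, ∑ j, A i j k = ν k)} :=
    Quotient.lift (fun x => ⟨matOf x, fun i => matOf_marg1 x i, fun j => matOf_marg2 x j,
        fun k => matOf_marg3 x k⟩)
      (by
        intro a b hab
        obtain ⟨g, hg⟩ := hab
        have hg' : g • b = a := hg
        exact Subtype.ext (by rw [← hg']; show matOf (g • b) = matOf b; exact matOf_smul g b))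
  have hbij : Function.Bijective Φ := by
    constructor
    · intro ω₁ ω₂ hw
      induction ω₁ using Quotient.inductionOn with | h a => ?_
      induction ω₂ using Quotient.inductionOn with | h b => ?_
      have hab : matOf a = matOf b := congrArg Subtype.val hw
      obtain ⟨g, hg⟩ := matOf_eq_orbit b a hab.symm
      exact Quotient.sound ⟨g, hg⟩
    · rintro ⟨A, hA1, hA2, hA3⟩
      obtain ⟨x, hx⟩ := matOf_surj hl hm hν A hA1 hA2 hA3
      exact ⟨⟦x⟧, Subtype.ext hx⟩
  have hM : Nat.card {A : Fin p → Fin q → Fin r → ℕ //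
        (∀ i, ∑ j, ∑ k, A i j k = l i) ∧ (∀ j, ∑ i, ∑ k, A i j k = m j) ∧
        (∀ k, ∑ i, ∑ j, A i j k = ν k)} =
      Fintype.card (orbitRel.Quotient (Perm (Fin n)) (XT n p q r l m ν)) := by
    rw [← Nat.card_eq_fintype_card]
    exact (Nat.card_congr (Equiv.ofBijective Φ hbij)).symm
  have hPC : ∀ g : Perm (Fin n),
      permChar n (extc l) g * permChar n (extc m) g * permChar n (extc ν) g =
        (Fintype.card (fixedBy (XT n p q r l m ν) g) : ℚ) := by
    intro g
    rw [permChar, permChar, permChar, ← Nat.card_eq_fintype_card,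
      Nat.card_congr (fixedEquiv g), Nat.card_prod, Nat.card_prod]
    push_cast
    ring
  rw [innerChar]
  simp only [trivChar, mul_one]
  rw [Finset.sum_congr rfl (fun g _ => hPC g)]
  have hsum : ∑ g : Perm (Fin n), (Fintype.card (fixedBy (XT n p q r l m ν) g) : ℚ) =
      ((∑ g : Perm (Fin n), Fintype.card (fixedBy (XT n p q r l m ν) g) : ℕ) : ℚ) := by
    push_cast; rfl
  rw [hsum, burn, hM]
  have hperm : Fintype.card (Perm (Fin n)) = n.factorial := by
    rw [Fintype.card_perm, Fintype.card_fin]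
  rw [hperm]
  have hf : (n.factorial : ℚ) ≠ 0 := Nat.cast_ne_zero.mpr n.factorial_ne_zero
  field_simp
  push_cast
  rfl
end

section
/- The number of 3-dimensional p×q×r matrices with entries in {0,1} and 1-marginals λ, μ, ν equals the inner product ⟨φ^λ ⊗ φ^μ ⊗ φ^ν, χ^(1^n)⟩, where χ^(1^n) is the sign character of S_n. -/
open Finset Equiv
open scoped Classical

noncomputable section Stmt5Aux

namespace Stmt5Aux

open Function

variable {n p q r : ℕ}

/-- Fiber condition of a coloring. -/
def fcond (n : ℕ) (c : ℕ → ℕ) (f : Fin n → ℕ) : Prop :=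
  ∀ k, Nat.card {x : Fin n // f x = k} = c k

lemma card_subtype_congr {α : Type*} {P Q : α → Prop} (h : ∀ x, P x ↔ Q x) :
    Nat.card {x // P x} = Nat.card {x // Q x} :=
  Nat.card_congr (Equiv.subtypeEquivRight h)

lemma fcond_lt {c : Fin p → ℕ} {f : Fin n → ℕ} (h : fcond n (extc c) f) (x : Fin n) :
    f x < p := by
  by_contra hx
  have h0 := h (f x)
  unfold extc at h0
  rw [dif_neg hx] at h0
  haveI : Nonempty {y : Fin n // f y = f x} := ⟨⟨x, rfl⟩⟩
  have := Nat.card_pos (α := {y : Fin n // f y = f x})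
  omega

instance finite_S (c : Fin p → ℕ) : Finite {f : Fin n → ℕ // fcond n (extc c) f} := by
  apply Finite.of_injective
    (fun s x => (⟨min (s.1 x) p, by omega⟩ : Fin (p + 1)))
  intro s t hst
  apply Subtype.ext; funext x
  have h1 := fcond_lt s.2 x
  have h2 := fcond_lt t.2 x
  have h3 := congrFun hst x
  simp only [Fin.mk.injEq] at h3
  omega

def Omega (n p q r : ℕ) (l : Fin p → ℕ) (m : Fin q → ℕ) (ν : Fin r → ℕ) :=
  {t : (Fin n → ℕ) × (Fin n → ℕ) × (Fin n → ℕ) //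
    fcond n (extc l) t.1 ∧ fcond n (extc m) t.2.1 ∧ fcond n (extc ν) t.2.2}

variable (l : Fin p → ℕ) (m : Fin q → ℕ) (ν : Fin r → ℕ)

def omegaEquiv : Omega n p q r l m ν ≃
    ({f : Fin n → ℕ // fcond n (extc l) f} × {f : Fin n → ℕ // fcond n (extc m) f} ×
      {f : Fin n → ℕ // fcond n (extc ν) f}) where
  toFun t := (⟨t.1.1, t.2.1⟩, ⟨t.1.2.1, t.2.2.1⟩, ⟨t.1.2.2, t.2.2.2⟩)
  invFun s := ⟨⟨s.1.1, s.2.1.1, s.2.2.1⟩, s.1.2, s.2.1.2, s.2.2.2⟩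
  left_inv t := rfl
  right_inv s := rfl

instance : Finite (Omega n p q r l m ν) :=
  Finite.of_equiv _ (omegaEquiv l m ν).symm

def FixT (g : Equiv.Perm (Fin n)) (t : (Fin n → ℕ) × (Fin n → ℕ) × (Fin n → ℕ)) : Prop :=
  (∀ x, t.1 (g x) = t.1 x) ∧ (∀ x, t.2.1 (g x) = t.2.1 x) ∧ (∀ x, t.2.2 (g x) = t.2.2 x)

def fixEquiv (g : Equiv.Perm (Fin n)) : {t : Omega n p q r l m ν // FixT g t.1} ≃
    ({f : Fin n → ℕ // fcond n (extc l) f ∧ ∀ x, f (g x) = f x} ×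
     {f : Fin n → ℕ // fcond n (extc m) f ∧ ∀ x, f (g x) = f x} ×
     {f : Fin n → ℕ // fcond n (extc ν) f ∧ ∀ x, f (g x) = f x}) where
  toFun u := (⟨u.1.1.1, u.1.2.1, u.2.1⟩, ⟨u.1.1.2.1, u.1.2.2.1, u.2.2.1⟩,
    ⟨u.1.1.2.2, u.1.2.2.2, u.2.2.2⟩)
  invFun s := ⟨⟨⟨s.1.1, s.2.1.1, s.2.2.1⟩, s.1.2.1, s.2.1.2.1, s.2.2.2.1⟩,
    s.1.2.2, s.2.1.2.2, s.2.2.2.2⟩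
  left_inv u := rfl
  right_inv s := rfl

lemma permChar_eq (c : ℕ → ℕ) (g : Equiv.Perm (Fin n)) :
    permChar n c g
      = (Nat.card {f : Fin n → ℕ // fcond n c f ∧ ∀ x, f (g x) = f x} : ℚ) := rfl

lemma permChar_prod (g : Equiv.Perm (Fin n)) :
    permChar n (extc l) g * permChar n (extc m) g * permChar n (extc ν) g
      = (Nat.card {t : Omega n p q r l m ν // FixT g t.1} : ℚ) := by
  rw [Nat.card_congr (fixEquiv l m ν g), Nat.card_prod, Nat.card_prod,
    permChar_eq, permChar_eq, permChar_eq]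
  push_cast
  ring

def TInj (t : (Fin n → ℕ) × (Fin n → ℕ) × (Fin n → ℕ)) : Prop :=
  ∀ x y : Fin n, t.1 x = t.1 y → t.2.1 x = t.2.1 y → t.2.2 x = t.2.2 y → x = y

lemma apply_swap {α : Type*} {f : Fin n → α} {x y : Fin n} (h : f x = f y) (z : Fin n) :
    f (Equiv.swap x y z) = f z := by
  rcases eq_or_ne z x with rfl | hzx
  · rw [Equiv.swap_apply_left]; exact h.symm
  rcases eq_or_ne z y with rfl | hzy
  · rw [Equiv.swap_apply_right]; exact h
  · rw [Equiv.swap_apply_of_ne_of_ne hzx hzy]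

lemma card_subtype_sum {α : Type*} [Fintype α] (P : α → Prop) :
    (Nat.card {x : α // P x} : ℚ) = ∑ x : α, if P x then 1 else 0 := by
  classical
  rw [Nat.card_eq_fintype_card, Fintype.card_subtype, Finset.card_filter, Nat.cast_sum]
  exact Finset.sum_congr rfl fun x _ => by split <;> simp

lemma stab_sum (t : (Fin n → ℕ) × (Fin n → ℕ) × (Fin n → ℕ)) :
    ∑ g : Equiv.Perm (Fin n), ((Equiv.Perm.sign g : ℤ) : ℚ) * (if FixT g t then 1 else 0)
      = if TInj t then 1 else 0 := by
  by_cases ht : TInj t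
  · rw [if_pos ht, Finset.sum_eq_single (1 : Equiv.Perm (Fin n))]
    · have hfix : FixT (1 : Equiv.Perm (Fin n)) t := ⟨fun x => rfl, fun x => rfl, fun x => rfl⟩
      rw [if_pos hfix]
      simp
    · intro g _ hg
      rw [if_neg, mul_zero]
      intro hfix
      apply hg
      apply Equiv.ext
      intro x
      rw [Equiv.Perm.one_apply]
      exact ht (g x) x (hfix.1 x) (hfix.2.1 x) (hfix.2.2 x)
    · intro h; exact absurd (Finset.mem_univ _) h
  · rw [if_neg ht]
    unfold TInj at ht
    push_neg at ht
    obtain ⟨x, y, h1, h2, h3, hxy⟩ := ht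
    have hτfix : ∀ g : Equiv.Perm (Fin n), FixT (g * Equiv.swap x y) t ↔ FixT g t := by
      have key : ∀ g : Equiv.Perm (Fin n), FixT g t → FixT (g * Equiv.swap x y) t := by
        intro g hg
        refine ⟨fun z => ?_, fun z => ?_, fun z => ?_⟩
        · rw [Equiv.Perm.mul_apply, hg.1, apply_swap h1]
        · rw [Equiv.Perm.mul_apply, hg.2.1, apply_swap h2]
        · rw [Equiv.Perm.mul_apply, hg.2.2, apply_swap h3]
      intro g
      refine ⟨fun h => ?_, key g⟩
      have := key _ h
      rwa [mul_assoc, Equiv.swap_mul_self, mul_one] at this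
    have hsign : ∀ g : Equiv.Perm (Fin n),
        ((Equiv.Perm.sign (g * Equiv.swap x y) : ℤ) : ℚ)
          = -((Equiv.Perm.sign g : ℤ) : ℚ) := by
      intro g
      rw [Equiv.Perm.sign_mul, Equiv.Perm.sign_swap hxy, mul_neg_one]
      simp
    have hS := Equiv.sum_comp (Equiv.mulRight (Equiv.swap x y))
      (fun g => ((Equiv.Perm.sign g : ℤ) : ℚ) * (if FixT g t then 1 else 0))
    have hneg : (∑ g : Equiv.Perm (Fin n),
          ((Equiv.Perm.sign g : ℤ) : ℚ) * (if FixT g t then 1 else 0))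
        = -∑ g : Equiv.Perm (Fin n),
          ((Equiv.Perm.sign g : ℤ) : ℚ) * (if FixT g t then 1 else 0) := by
      conv_lhs => rw [← hS]
      rw [← Finset.sum_neg_distrib]
      apply Finset.sum_congr rfl
      intro g _
      simp only [Equiv.coe_mulRight, hsign g, hτfix g]
      ring
    linarith

def Einj (n p q r : ℕ) (l : Fin p → ℕ) (m : Fin q → ℕ) (ν : Fin r → ℕ) :=
  {e : Fin n → Fin p × Fin q × Fin r // Function.Injective e ∧
    (∀ i, Nat.card {x : Fin n // (e x).1 = i} = l i) ∧
    (∀ j, Nat.card {x : Fin n // (e x).2.1 = j} = m j) ∧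
    (∀ k, Nat.card {x : Fin n // (e x).2.2 = k} = ν k)}

lemma fcond_to (c : Fin p → ℕ) {f : Fin n → ℕ} (h : fcond n (extc c) f)
    (hb : ∀ x, f x < p) (i : Fin p) :
    Nat.card {x : Fin n // (⟨f x, hb x⟩ : Fin p) = i} = c i := by
  rw [card_subtype_congr (fun x => (Fin.ext_iff (a := ⟨f x, hb x⟩) (b := i)))]
  have h0 := h i.val
  unfold extc at h0
  rwa [dif_pos i.isLt, Fin.eta] at h0

lemma fcond_of (c : Fin p → ℕ) {e' : Fin n → Fin p}
    (h : ∀ i, Nat.card {x : Fin n // e' x = i} = c i) :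
    fcond n (extc c) (fun x => (e' x : ℕ)) := by
  intro k
  by_cases hk : k < p
  · have hiff : ∀ x : Fin n, ((e' x : ℕ) = k) ↔ e' x = ⟨k, hk⟩ :=
      fun x => ⟨fun hx => Fin.ext hx, fun hx => congrArg Fin.val hx⟩
    rw [card_subtype_congr hiff, h ⟨k, hk⟩]
    unfold extc
    rw [dif_pos hk]
  · unfold extc
    rw [dif_neg hk]
    haveI : IsEmpty {x : Fin n // ((e' x : ℕ) = k)} :=
      ⟨fun w => hk (w.2 ▸ (e' w.1).isLt)⟩
    exact Nat.card_of_isEmpty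

def omegaInjEquiv : {t : Omega n p q r l m ν // TInj t.1} ≃ Einj n p q r l m ν where
  toFun u := ⟨fun x => (⟨u.1.1.1 x, fcond_lt u.1.2.1 x⟩, ⟨u.1.1.2.1 x, fcond_lt u.1.2.2.1 x⟩,
      ⟨u.1.1.2.2 x, fcond_lt u.1.2.2.2 x⟩),
    by
      refine ⟨?_, fun i => fcond_to l u.1.2.1 _ i, fun j => fcond_to m u.1.2.2.1 _ j,
        fun k => fcond_to ν u.1.2.2.2 _ k⟩
      intro a b hab
      simp only [Prod.mk.injEq, Fin.mk.injEq] at hab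
      exact u.2 a b hab.1 hab.2.1 hab.2.2⟩
  invFun v := ⟨⟨⟨fun x => ((v.1 x).1 : ℕ), fun x => ((v.1 x).2.1 : ℕ),
      fun x => ((v.1 x).2.2 : ℕ)⟩,
      fcond_of l v.2.2.1, fcond_of m v.2.2.2.1, fcond_of ν v.2.2.2.2⟩,
    by
      intro a b h1 h2 h3
      apply v.2.1
      exact Prod.ext (Fin.ext h1) (Prod.ext (Fin.ext h2) (Fin.ext h3))⟩
  left_inv u := rfl
  right_inv v := rfl

def BSet (n p q r : ℕ) (l : Fin p → ℕ) (m : Fin q → ℕ) (ν : Fin r → ℕ) :=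
  {B : Fin p → Fin q → Fin r → Bool //
    (∀ i, ∑ j, ∑ k, (if B i j k then 1 else 0) = l i) ∧
    (∀ j, ∑ i, ∑ k, (if B i j k then 1 else 0) = m j) ∧
    (∀ k, ∑ i, ∑ j, (if B i j k then 1 else 0) = ν k)}

lemma card_fiber_eq_sum1 {e : Fin n → Fin p × Fin q × Fin r} (he : Function.Injective e)
    (i : Fin p) :
    Nat.card {x : Fin n // (e x).1 = i}
      = ∑ j : Fin q, ∑ k : Fin r, (if ∃ x, e x = (i, j, k) then 1 else 0) := by
  classical
  rw [Nat.card_eq_fintype_card, Fintype.card_subtype]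
  have hrhs : (∑ j : Fin q, ∑ k : Fin r, ((if ∃ x, e x = (i, j, k) then 1 else 0) : ℕ))
      = (Finset.univ.filter (fun v : Fin q × Fin r => ∃ x, e x = (i, v.1, v.2))).card := by
    rw [Finset.card_filter, Fintype.sum_prod_type]
  rw [hrhs]
  apply Finset.card_nbij (fun x => ((e x).2.1, (e x).2.2))
  · intro a ha
    simp only [Finset.mem_coe, Finset.mem_filter, Finset.mem_univ, true_and] at ha ⊢
    exact ⟨a, by rw [← ha]⟩
  · intro a ha b hb hab
    simp only [Finset.coe_filter, Finset.mem_univ, true_and, Set.mem_setOf_eq] at ha hb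
    simp only [Prod.mk.injEq] at hab
    exact he (Prod.ext (ha.trans hb.symm) (Prod.ext hab.1 hab.2))
  · intro v hv
    simp only [Finset.coe_filter, Finset.mem_univ, true_and, Set.mem_setOf_eq] at hv
    obtain ⟨x, hx⟩ := hv
    refine ⟨x, ?_, ?_⟩
    · simp [hx]
    · simp [hx]

lemma card_fiber_eq_sum2 {e : Fin n → Fin p × Fin q × Fin r} (he : Function.Injective e)
    (j : Fin q) :
    Nat.card {x : Fin n // (e x).2.1 = j}
      = ∑ i : Fin p, ∑ k : Fin r, (if ∃ x, e x = (i, j, k) then 1 else 0) := by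
  classical
  rw [Nat.card_eq_fintype_card, Fintype.card_subtype]
  have hrhs : (∑ i : Fin p, ∑ k : Fin r, ((if ∃ x, e x = (i, j, k) then 1 else 0) : ℕ))
      = (Finset.univ.filter (fun v : Fin p × Fin r => ∃ x, e x = (v.1, j, v.2))).card := by
    rw [Finset.card_filter, Fintype.sum_prod_type]
  rw [hrhs]
  apply Finset.card_nbij (fun x => ((e x).1, (e x).2.2))
  · intro a ha
    simp only [Finset.mem_coe, Finset.mem_filter, Finset.mem_univ, true_and] at ha ⊢
    exact ⟨a, by rw [← ha]⟩
  · intro a ha b hb hab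
    simp only [Finset.coe_filter, Finset.mem_univ, true_and, Set.mem_setOf_eq] at ha hb
    simp only [Prod.mk.injEq] at hab
    exact he (Prod.ext hab.1 (Prod.ext (ha.trans hb.symm) hab.2))
  · intro v hv
    simp only [Finset.coe_filter, Finset.mem_univ, true_and, Set.mem_setOf_eq] at hv
    obtain ⟨x, hx⟩ := hv
    refine ⟨x, ?_, ?_⟩
    · simp [hx]
    · simp [hx]

lemma card_fiber_eq_sum3 {e : Fin n → Fin p × Fin q × Fin r} (he : Function.Injective e)
    (k : Fin r) :
    Nat.card {x : Fin n // (e x).2.2 = k}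
      = ∑ i : Fin p, ∑ j : Fin q, (if ∃ x, e x = (i, j, k) then 1 else 0) := by
  classical
  rw [Nat.card_eq_fintype_card, Fintype.card_subtype]
  have hrhs : (∑ i : Fin p, ∑ j : Fin q, ((if ∃ x, e x = (i, j, k) then 1 else 0) : ℕ))
      = (Finset.univ.filter (fun v : Fin p × Fin q => ∃ x, e x = (v.1, v.2, k))).card := by
    rw [Finset.card_filter, Fintype.sum_prod_type]
  rw [hrhs]
  apply Finset.card_nbij (fun x => ((e x).1, (e x).2.1))
  · intro a ha
    simp only [Finset.mem_coe, Finset.mem_filter, Finset.mem_univ, true_and] at ha ⊢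
    exact ⟨a, by rw [← ha]⟩
  · intro a ha b hb hab
    simp only [Finset.coe_filter, Finset.mem_univ, true_and, Set.mem_setOf_eq] at ha hb
    simp only [Prod.mk.injEq] at hab
    exact he (Prod.ext hab.1 (Prod.ext hab.2 (ha.trans hb.symm)))
  · intro v hv
    simp only [Finset.coe_filter, Finset.mem_univ, true_and, Set.mem_setOf_eq] at hv
    obtain ⟨x, hx⟩ := hv
    refine ⟨x, ?_, ?_⟩
    · simp [hx]
    · simp [hx]

abbrev suppT (B : Fin p → Fin q → Fin r → Bool) :=
  {v : Fin p × Fin q × Fin r // B v.1 v.2.1 v.2.2 = true}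

lemma range_val_iff {B : Fin p → Fin q → Fin r → Bool} (σ : Fin n ≃ suppT B)
    (v : Fin p × Fin q × Fin r) :
    (∃ x, (σ x).val = v) ↔ B v.1 v.2.1 v.2.2 = true :=
  ⟨fun ⟨x, hx⟩ => hx ▸ (σ x).2, fun hv => ⟨σ.symm ⟨v, hv⟩, by simp⟩⟩

lemma eOf_mem (B : BSet n p q r l m ν) (σ : Fin n ≃ suppT B.1) :
    Function.Injective (fun x : Fin n => (σ x).val) ∧
    (∀ i, Nat.card {x : Fin n // ((σ x).val).1 = i} = l i) ∧
    (∀ j, Nat.card {x : Fin n // ((σ x).val).2.1 = j} = m j) ∧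
    (∀ k, Nat.card {x : Fin n // ((σ x).val).2.2 = k} = ν k) := by
  have hinj : Function.Injective (fun x : Fin n => (σ x).val) :=
    fun a b h => σ.injective (Subtype.ext h)
  refine ⟨hinj, fun i => ?_, fun j => ?_, fun k => ?_⟩
  · rw [card_fiber_eq_sum1 hinj i, ← B.2.1 i]
    refine Finset.sum_congr rfl fun j _ => Finset.sum_congr rfl fun k _ => ?_
    simp only [range_val_iff σ]
  · rw [card_fiber_eq_sum2 hinj j, ← B.2.2.1 j]
    refine Finset.sum_congr rfl fun i _ => Finset.sum_congr rfl fun k _ => ?_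
    simp only [range_val_iff σ]
  · rw [card_fiber_eq_sum3 hinj k, ← B.2.2.2 k]
    refine Finset.sum_congr rfl fun i _ => Finset.sum_congr rfl fun j _ => ?_
    simp only [range_val_iff σ]

def phi : Einj n p q r l m ν → BSet n p q r l m ν := fun v =>
  ⟨fun i j k => decide (∃ x, v.1 x = (i, j, k)),
    by
      refine ⟨fun i => ?_, fun j => ?_, fun k => ?_⟩
      · rw [← v.2.2.1 i, card_fiber_eq_sum1 v.2.1 i]
        exact Finset.sum_congr rfl fun j _ => Finset.sum_congr rfl fun k _ => by
          simp only [decide_eq_true_eq]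
      · rw [← v.2.2.2.1 j, card_fiber_eq_sum2 v.2.1 j]
        exact Finset.sum_congr rfl fun i _ => Finset.sum_congr rfl fun k _ => by
          simp only [decide_eq_true_eq]
      · rw [← v.2.2.2.2 k, card_fiber_eq_sum3 v.2.1 k]
        exact Finset.sum_congr rfl fun i _ => Finset.sum_congr rfl fun j _ => by
          simp only [decide_eq_true_eq]⟩

def fiberEquiv (B : BSet n p q r l m ν) :
    {u : Einj n p q r l m ν // phi l m ν u = B} ≃ (Fin n ≃ suppT B.1) where
  toFun u := Equiv.ofBijective
    (fun x => (⟨u.1.1 x, by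
      have h := congrFun (congrFun (congrFun (congrArg Subtype.val u.2) (u.1.1 x).1)
        (u.1.1 x).2.1) (u.1.1 x).2.2
      rw [← h]
      exact decide_eq_true ⟨x, rfl⟩⟩ : suppT B.1))
    ⟨fun a b h => u.1.2.1 (congrArg Subtype.val h),
     by
      rintro ⟨v, hv⟩
      have h := congrFun (congrFun (congrFun (congrArg Subtype.val u.2) v.1) v.2.1) v.2.2
      rw [← h] at hv
      obtain ⟨x, hx⟩ := of_decide_eq_true hv
      exact ⟨x, Subtype.ext hx⟩⟩
  invFun σ := ⟨⟨fun x => (σ x).val, (eOf_mem l m ν B σ).1, (eOf_mem l m ν B σ).2.1,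
      (eOf_mem l m ν B σ).2.2.1, (eOf_mem l m ν B σ).2.2.2⟩,
    by
      apply Subtype.ext
      funext i j k
      dsimp only [phi]
      rcases hb : B.1 i j k with _ | _
      · simp only [decide_eq_false_iff_not]
        intro hex
        have := (range_val_iff σ (i, j, k)).mp hex
        rw [hb] at this
        exact Bool.false_ne_true this
      · simp only [decide_eq_true_eq]
        exact (range_val_iff σ (i, j, k)).mpr hb⟩
  left_inv u := by
    apply Subtype.ext
    apply Subtype.ext
    rfl
  right_inv σ := by
    apply Equiv.ext
    intro x
    exact Subtype.ext rfl

lemma card_suppT (B : BSet n p q r l m ν) (hl : ∑ i, l i = n) :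
    Fintype.card (suppT B.1) = n := by
  classical
  rw [Fintype.card_subtype, Finset.card_filter, ← hl]
  rw [Fintype.sum_prod_type]
  refine Finset.sum_congr rfl fun i _ => ?_
  rw [Fintype.sum_prod_type]
  exact B.2.1 i

lemma card_fiber (B : BSet n p q r l m ν) (hl : ∑ i, l i = n) :
    Nat.card {u : Einj n p q r l m ν // phi l m ν u = B} = n.factorial := by
  classical
  rw [Nat.card_congr (fiberEquiv l m ν B), Nat.card_eq_fintype_card]
  have e0 : Fin n ≃ suppT B.1 :=
    Fintype.equivOfCardEq (by rw [Fintype.card_fin, card_suppT l m ν B hl])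
  rw [Fintype.card_equiv e0, Fintype.card_fin]

lemma card_Einj (hl : ∑ i, l i = n) :
    Nat.card (Einj n p q r l m ν) = Nat.card (BSet n p q r l m ν) * n.factorial := by
  classical
  haveI : Finite (Einj n p q r l m ν) := Subtype.finite
  haveI : Finite (BSet n p q r l m ν) := Subtype.finite
  haveI : Fintype (Einj n p q r l m ν) := Fintype.ofFinite _
  haveI : Fintype (BSet n p q r l m ν) := Fintype.ofFinite _
  rw [Nat.card_eq_fintype_card, Nat.card_eq_fintype_card]
  have h := Finset.card_eq_sum_card_fiberwise
    (f := phi (n := n) l m ν) (s := Finset.univ) (t := Finset.univ) (fun x _ => Finset.mem_univ _)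
  rw [Finset.card_univ] at h
  rw [h]
  have h2 : ∀ B : BSet n p q r l m ν,
      (Finset.univ.filter (fun u => phi l m ν u = B)).card = n.factorial := by
    intro B
    have hcf := card_fiber l m ν B hl
    rwa [Nat.card_eq_fintype_card, Fintype.card_subtype] at hcf
  rw [Finset.sum_congr rfl (fun B _ => h2 B), Finset.sum_const, Finset.card_univ,
    smul_eq_mul]

lemma ite_eq_of_le_one {a : ℕ} (h : a ≤ 1) : (if a = 1 then 1 else 0) = a := by
  split <;> omega

lemma card_mat :
    Nat.card {A : Fin p → Fin q → Fin r → ℕ // (∀ i j k, A i j k ≤ 1) ∧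
        (∀ i, ∑ j, ∑ k, A i j k = l i) ∧ (∀ j, ∑ i, ∑ k, A i j k = m j) ∧
        (∀ k, ∑ i, ∑ j, A i j k = ν k)}
      = Nat.card (BSet n p q r l m ν) := by
  apply Nat.card_congr
  refine ⟨fun A => ⟨fun i j k => decide (A.1 i j k = 1), ?_, ?_, ?_⟩,
    fun B => ⟨fun i j k => if B.1 i j k then 1 else 0, ?_, ?_, ?_, ?_⟩, ?_, ?_⟩
  · intro i
    rw [← A.2.2.1 i]
    exact Finset.sum_congr rfl fun j _ => Finset.sum_congr rfl fun k _ => by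
      simp only [decide_eq_true_eq]; exact ite_eq_of_le_one (A.2.1 i j k)
  · intro j
    rw [← A.2.2.2.1 j]
    exact Finset.sum_congr rfl fun i _ => Finset.sum_congr rfl fun k _ => by
      simp only [decide_eq_true_eq]; exact ite_eq_of_le_one (A.2.1 i j k)
  · intro k
    rw [← A.2.2.2.2 k]
    exact Finset.sum_congr rfl fun i _ => Finset.sum_congr rfl fun j _ => by
      simp only [decide_eq_true_eq]; exact ite_eq_of_le_one (A.2.1 i j k)
  · intro i j k; dsimp only; split <;> omega
  · intro i
    rw [← B.2.1 i]
  · intro j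
    rw [← B.2.2.1 j]
  · intro k
    rw [← B.2.2.2 k]
  · intro A
    apply Subtype.ext
    funext i j k
    simp only [decide_eq_true_eq]
    exact ite_eq_of_le_one (A.2.1 i j k)
  · intro B
    apply Subtype.ext
    funext i j k
    rcases hb : B.1 i j k with _ | _ <;> simp [hb]

end Stmt5Aux

end Stmt5Aux


/-- Snapper, dual: the number of `p × q × r` binary matrices with
1-marginals `l`, `m`, `ν` equals `⟨φ^l ⊗ φ^m ⊗ φ^ν, χ^{(1^n)}⟩`. -/
theorem stmt5 (n p q r : ℕ) (l : Fin p → ℕ) (m : Fin q → ℕ) (ν : Fin r → ℕ)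
    (hl : ∑ i, l i = n) (hm : ∑ j, m j = n) (hν : ∑ k, ν k = n) :
    (Nat.card {A : Fin p → Fin q → Fin r → ℕ // (∀ i j k, A i j k ≤ 1) ∧
        (∀ i, ∑ j, ∑ k, A i j k = l i) ∧ (∀ j, ∑ i, ∑ k, A i j k = m j) ∧
        (∀ k, ∑ i, ∑ j, A i j k = ν k)} : ℚ) =
      innerChar n
        (fun g => permChar n (extc l) g * permChar n (extc m) g * permChar n (extc ν) g)
        (signChar n) := by
  classical
  haveI : Fintype (Stmt5Aux.Omega n p q r l m ν) := Fintype.ofFinite _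
  have hIC : innerChar n
      (fun g => permChar n (extc l) g * permChar n (extc m) g * permChar n (extc ν) g)
      (signChar n)
      = (∑ g : Perm (Fin n), permChar n (extc l) g * permChar n (extc m) g *
          permChar n (extc ν) g * signChar n g) / (n.factorial : ℚ) := rfl
  rw [Stmt5Aux.card_mat l m ν, hIC]
  have h1 : ∀ g : Perm (Fin n),
      permChar n (extc l) g * permChar n (extc m) g * permChar n (extc ν) g * signChar n g
        = ∑ t : Stmt5Aux.Omega n p q r l m ν,
            ((Perm.sign g : ℤ) : ℚ) * (if Stmt5Aux.FixT g t.1 then 1 else 0) := by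
    intro g
    rw [Stmt5Aux.permChar_prod, Stmt5Aux.card_subtype_sum, signChar, Finset.sum_mul]
    exact Finset.sum_congr rfl fun t _ => mul_comm _ _
  rw [Finset.sum_congr rfl (fun g _ => h1 g), Finset.sum_comm,
    Finset.sum_congr rfl (fun t _ => Stmt5Aux.stab_sum t.1),
    ← Stmt5Aux.card_subtype_sum (P := fun t : Stmt5Aux.Omega n p q r l m ν =>
        Stmt5Aux.TInj t.1),
    Nat.card_congr (Stmt5Aux.omegaInjEquiv l m ν),
    Stmt5Aux.card_Einj l m ν hl, Nat.cast_mul, mul_div_assoc, div_self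
      (Nat.cast_ne_zero.mpr n.factorial_ne_zero), mul_one]
end
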